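/- Let c ≠ 0 be a real number. For all y₀, y₁ ∈ ℝ there exists a unique twice differentiable function y : [0,1] → ℝ satisfying y''(t) = c²·y(t) on [0,1] with y(0) = y₀ and y(1) = y₁. -/

import Mathlib

open Real Set

noncomputable def esol (c A B : ℝ) : ℝ → ℝ := fun t => A * exp (c*t) + B * exp (-(c*t))

lemma esol_hasDerivAt (c A B t : ℝ) :
    HasDerivAt (esol c A B) (esol c (c*A) (-(c*B)) t) t := by
  have h1 : HasDerivAt (fun t : ℝ => exp (c*t)) (exp (c*t) * c) t :=
    HasDerivAt.exp (by simpa using (hasDerivAt_id t).const_mul c)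
  have h2 : HasDerivAt (fun t : ℝ => exp (-(c*t))) (exp (-(c*t)) * (-c)) t :=
    HasDerivAt.exp (by simpa using ((hasDerivAt_id t).const_mul c).fun_neg)
  have := (h1.const_mul A).add (h2.const_mul B)
  convert this using 1
  · rfl
  · rfl
  · rfl
  simp [esol]; ring

noncomputable def Lmap (c : ℝ) : (ℝ × ℝ) →L[ℝ] (ℝ × ℝ) :=
  (ContinuousLinearMap.snd ℝ ℝ ℝ).prod ((c^2) • ContinuousLinearMap.fst ℝ ℝ ℝ)

/-- IVP uniqueness on [0,1] for y'' = c² y. -/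
lemma ivp_unique (c : ℝ) (f g f' g' : ℝ → ℝ)
    (hf1 : ∀ t ∈ Icc (0:ℝ) 1, HasDerivWithinAt f (f' t) (Icc (0:ℝ) 1) t)
    (hf2 : ∀ t ∈ Icc (0:ℝ) 1, HasDerivWithinAt f' (c^2 * f t) (Icc (0:ℝ) 1) t)
    (hg1 : ∀ t ∈ Icc (0:ℝ) 1, HasDerivWithinAt g (g' t) (Icc (0:ℝ) 1) t)
    (hg2 : ∀ t ∈ Icc (0:ℝ) 1, HasDerivWithinAt g' (c^2 * g t) (Icc (0:ℝ) 1) t)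
    (h0 : f 0 = g 0) (h0' : f' 0 = g' 0) :
    EqOn f g (Icc (0:ℝ) 1) := by
  set F : ℝ → ℝ × ℝ := fun t => (f t, f' t) with hF
  set G : ℝ → ℝ × ℝ := fun t => (g t, g' t) with hG
  have key : EqOn F G (Icc (0:ℝ) 1) := by
    apply ODE_solution_unique (v := fun _ p => Lmap c p) (K := ‖Lmap c‖₊)
      (a := 0) (b := 1)
    · intro t; exact (Lmap c).lipschitz
    · exact ContinuousOn.prodMk
        (fun t ht => ((hf1 t ht).continuousWithinAt))
        (fun t ht => ((hf2 t ht).continuousWithinAt))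
    · intro t ht
      have ht' : t ∈ Icc (0:ℝ) 1 := Ico_subset_Icc_self ht
      have hmem : Icc (0:ℝ) 1 ∈ nhdsWithin t (Ici t) := by
        have : Icc t 1 ∈ nhdsWithin t (Ici t) := Icc_mem_nhdsGE_of_mem ⟨le_refl t, ht.2⟩
        exact Filter.mem_of_superset this (Icc_subset_Icc ht.1 le_rfl)
      exact (((hf1 t ht').prodMk (hf2 t ht')).mono_of_mem_nhdsWithin hmem)
    · exact ContinuousOn.prodMk
        (fun t ht => ((hg1 t ht).continuousWithinAt))
        (fun t ht => ((hg2 t ht).continuousWithinAt))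
    · intro t ht
      have ht' : t ∈ Icc (0:ℝ) 1 := Ico_subset_Icc_self ht
      have hmem : Icc (0:ℝ) 1 ∈ nhdsWithin t (Ici t) := by
        have : Icc t 1 ∈ nhdsWithin t (Ici t) := Icc_mem_nhdsGE_of_mem ⟨le_refl t, ht.2⟩
        exact Filter.mem_of_superset this (Icc_subset_Icc ht.1 le_rfl)
      exact (((hg1 t ht').prodMk (hg2 t ht')).mono_of_mem_nhdsWithin hmem)
    · simp [hF, hG, h0, h0']
  exact fun t ht => congrArg Prod.fst (key ht)

/-- `y` is a twice differentiable solution of the two-point boundary value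
problem `y'' = c² y` on `[0,1]` with `y(0) = y₀`, `y(1) = y₁`. -/
def IsBVPSol (c y₀ y₁ : ℝ) (y : ℝ → ℝ) : Prop :=
  ∃ y' : ℝ → ℝ,
    (∀ t ∈ Set.Icc (0:ℝ) 1, HasDerivWithinAt y (y' t) (Set.Icc (0:ℝ) 1) t) ∧
    (∀ t ∈ Set.Icc (0:ℝ) 1,
      HasDerivWithinAt y' (c ^ 2 * y t) (Set.Icc (0:ℝ) 1) t) ∧
    y 0 = y₀ ∧ y 1 = y₁

lemma esol_fst_deriv (c A B : ℝ) :
    ∀ t ∈ Icc (0:ℝ) 1, HasDerivWithinAt (esol c A B) (esol c (c*A) (-(c*B)) t)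
      (Icc (0:ℝ) 1) t :=
  fun t _ => (esol_hasDerivAt c A B t).hasDerivWithinAt

lemma esol_snd_deriv (c A B : ℝ) :
    ∀ t ∈ Icc (0:ℝ) 1, HasDerivWithinAt (esol c (c*A) (-(c*B)))
      (c ^ 2 * esol c A B t) (Icc (0:ℝ) 1) t := by
  intro t _
  have := (esol_hasDerivAt c (c*A) (-(c*B)) t).hasDerivWithinAt
    (s := Icc (0:ℝ) 1)
  convert this using 1
  · rfl
  · rfl
  simp [esol]; ring

/-- For `c ≠ 0` the boundary value problem `y'' = c² y`, `y(0) = y₀`,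
`y(1) = y₁` on `[0,1]` has a solution, unique on `[0,1]`. -/
theorem bvp_exists_unique (c : ℝ) (hc : c ≠ 0) (y₀ y₁ : ℝ) :
    ∃ y : ℝ → ℝ, IsBVPSol c y₀ y₁ y ∧
      ∀ z : ℝ → ℝ, IsBVPSol c y₀ y₁ z → Set.EqOn z y (Set.Icc (0:ℝ) 1) := by
  have hD : exp c - exp (-c) ≠ 0 := by
    intro h
    have : c = -c := Real.exp_eq_exp.mp (by linarith)
    exact hc (by linarith)
  set A : ℝ := (y₁ - y₀ * exp (-c)) / (exp c - exp (-c)) with hA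
  set B : ℝ := y₀ - A with hB
  have hsol : ∀ A B : ℝ, IsBVPSol c (esol c A B 0) (esol c A B 1) (esol c A B) :=
    fun A B => ⟨esol c (c*A) (-(c*B)), esol_fst_deriv c A B, esol_snd_deriv c A B,
      rfl, rfl⟩
  have h0 : esol c A B 0 = y₀ := by simp [esol, hB]
  have h1 : esol c A B 1 = y₁ := by
    simp only [esol, mul_one, hB]
    rw [hA]
    field_simp
    ring
  refine ⟨esol c A B, h0 ▸ h1 ▸ hsol A B, ?_⟩
  rintro z ⟨z', hz1, hz2, hz0, hz1'⟩
  -- adjust the derivative at 0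
  set b : ℝ := z' 0 - esol c (c*A) (-(c*B)) 0 with hb
  set A' : ℝ := A + b/(2*c) with hA'
  set B' : ℝ := B - b/(2*c) with hB'
  have hval0 : ∀ A B : ℝ, esol c A B 0 = A + B := by intro A B; simp [esol]
  have hAB0 : A + B = y₀ := by simpa [esol] using h0
  have hzh : EqOn z (esol c A' B') (Icc (0:ℝ) 1) := by
    apply ivp_unique c z (esol c A' B') z' (esol c (c*(A')) (-(c*B')))
      hz1 hz2 (esol_fst_deriv c A' B') (esol_snd_deriv c A' B')
    · rw [hz0, hval0, hA', hB']; linarith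
    · rw [hval0, hA', hB', hb, hval0]
      field_simp
      ring
  have hb0 : b = 0 := by
    have h1' : esol c A' B' 1 = y₁ := by rw [← hzh (right_mem_Icc.mpr zero_le_one), hz1']
    have hsplit : esol c A' B' 1 = esol c A B 1 + b/(2*c) * (exp c - exp (-c)) := by
      rw [hA', hB']; simp only [esol, mul_one]; ring
    rw [hsplit, h1] at h1'
    have hz : b/(2*c) * (exp c - exp (-c)) = 0 := by linarith
    rcases mul_eq_zero.mp hz with h | h
    · field_simp at h; simpa using h
    · exact absurd h hD
  have hAA : A' = A := by rw [hA', hb0]; ring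
  have hBB : B' = B := by rw [hB', hb0]; ring
  intro t ht
  rw [hzh ht, hAA, hBB]
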